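/- Let (R,m,k) be a commutative Noetherian local ring of depth at most 1 and M a finitely generated reflexive R-module. Then M is balanced if and only if M has a nonzero free R-module direct summand. -/

import Mathlib

open CategoryTheory

universe u v

/-- `M` is balanced if the natural map `R → Z(End_R M)`, sending `r` to multiplication by
`r`, is an isomorphism onto the center of `End_R M`. -/
def IsBalanced (R : Type u) (M : Type v) [CommRing R] [AddCommGroup M] [Module R M] : Prop :=
  Function.Bijective fun r : R =>
    (⟨algebraMap R (Module.End R M) r, Subalgebra.algebraMap_mem _ r⟩ :
      Subalgebra.center R (Module.End R M))

/-- Depth at most one: `Hom_R(k,R) ≠ 0` or `Ext¹_R(k,R) ≠ 0`, where `k` is the residue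
field of the local ring `R`. -/
def DepthLEOne (R : Type u) [CommRing R] [IsLocalRing R] : Prop :=
  Nontrivial (IsLocalRing.ResidueField R →ₗ[R] R) ∨
  Nontrivial (((Ext R (ModuleCat.{u} R) 1).obj
    (Opposite.op (ModuleCat.of R (IsLocalRing.ResidueField R)))).obj (ModuleCat.of R R))

section Helpers

variable {R : Type u} {M : Type v} [CommRing R] [AddCommGroup M] [Module R M]

open Classical in
noncomputable def tdiv (t a : R) : R :=
  if h : ∃ b, t * b = a then h.choose else 0

open Classical in
lemma tdiv_spec {t a : R} (h : ∃ b, t * b = a) : t * tdiv t a = a := by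
  rw [tdiv, dif_pos h]; exact h.choose_spec

lemma tdiv_unique {t : R} (htreg : ∀ c, t * c = 0 → c = 0) {a c : R} (h : t * c = a) :
    tdiv t a = c := by
  have h1 : t * tdiv t a = a := tdiv_spec ⟨c, h⟩
  have h2 : t * (tdiv t a - c) = 0 := by rw [mul_sub, h1, h, sub_self]
  exact sub_eq_zero.mp (htreg _ h2)

noncomputable def splitEquiv (f : M →ₗ[R] R) (hf : Function.Surjective f) :
    M ≃ₗ[R] (LinearMap.ker f) × R := by
  have hx₀ : f (Classical.choose (hf 1)) = 1 := Classical.choose_spec (hf 1)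
  set x₀ := Classical.choose (hf 1)
  refine LinearEquiv.ofLinear
    (LinearMap.prod
      (LinearMap.codRestrict _ (LinearMap.id - (LinearMap.toSpanSingleton R M x₀).comp f) ?_) f)
    ((LinearMap.ker f).subtype.coprod (LinearMap.toSpanSingleton R M x₀)) ?_ ?_
  · intro x
    simp [LinearMap.mem_ker, LinearMap.toSpanSingleton_apply, map_smul, hx₀, mul_comm]
  · apply LinearMap.ext; rintro ⟨⟨y, hy⟩, r⟩
    rw [LinearMap.mem_ker] at hy
    ext
    · simp [LinearMap.toSpanSingleton_apply, hy, hx₀]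
    · simp [LinearMap.toSpanSingleton_apply, hy, hx₀]
  · apply LinearMap.ext; intro x
    simp [LinearMap.toSpanSingleton_apply]

lemma balanced_of_equiv {N : Type v} [AddCommGroup N] [Module R N] (e : M ≃ₗ[R] N × R) :
    IsBalanced R M := by
  constructor
  · intro r₁ r₂ h
    have h0 : algebraMap R (Module.End R M) r₁ = algebraMap R (Module.End R M) r₂ :=
      congrArg Subtype.val h
    have h' : r₁ • e.symm (0, 1) = r₂ • e.symm (0, 1) := by
      rw [← Module.algebraMap_end_apply R R, ← Module.algebraMap_end_apply R R, h0]
    have := congrArg (fun z => (e z).2) h'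
    simpa using this
  · rintro ⟨Φ, hΦ⟩
    rw [Subalgebra.mem_center_iff] at hΦ
    set y₀ := e.symm (0, 1) with hy₀
    refine ⟨(e (Φ y₀)).2, Subtype.ext ?_⟩
    apply LinearMap.ext; intro x
    rw [Module.algebraMap_end_apply]
    set ψ : Module.End R M := ((LinearMap.snd R N R).comp e.toLinearMap).smulRight x with hψ
    have := congrFun (congrArg DFunLike.coe (hΦ ψ)) y₀
    have hψy : ψ y₀ = x := by simp [hψ, hy₀]
    have h1 : ψ (Φ y₀) = (e (Φ y₀)).2 • x := by simp [hψ]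
    rw [Module.End.mul_apply, Module.End.mul_apply, hψy, h1] at this
    exact this

lemma kill_of_reflexive [Module.IsReflexive R M] {c : R}
    (h : ∀ (f : Module.Dual R M) (x : M), c * f x = 0) (x : M) : c • x = 0 := by
  apply (Module.evalEquiv R M).injective
  rw [map_smul, map_zero]
  ext f
  simp only [LinearMap.smul_apply, Module.evalEquiv_apply, Module.Dual.eval_apply,
    LinearMap.zero_apply, smul_eq_mul]
  exact h f x

end Helpers


section AssFin

variable {R : Type u} [CommRing R] {M : Type v} [AddCommGroup M] [Module R M]

lemma ass_subset_union [IsNoetherianRing R] (N : Submodule R M) :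
    associatedPrimes R M ⊆ associatedPrimes R N ∪ associatedPrimes R (M ⧸ N) := by
  rintro p hp'
  obtain ⟨hp, x, rfl⟩ := isAssociatedPrime_iff.mp hp'
  rw [Submodule.bot_colon'] at hp ⊢
  by_cases hc : ∃ a : R, a • x ∈ N ∧ a • x ≠ 0
  · obtain ⟨a, haN, ha0⟩ := hc
    left
    rw [AssociatedPrimes.mem_iff, isAssociatedPrime_iff]
    refine ⟨hp, ⟨a • x, haN⟩, ?_⟩
    rw [Submodule.bot_colon']
    ext b
    rw [Submodule.mem_annihilator_span_singleton, Submodule.mem_annihilator_span_singleton]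
    constructor
    · intro hb
      apply Subtype.ext
      show b • (a • x) = 0
      rw [smul_comm, hb, smul_zero]
    · intro hb
      have hb' : (b * a) • x = 0 := by
        have := congrArg Subtype.val hb
        simpa [mul_smul] using this
      have : b * a ∈ (Submodule.span R {x}).annihilator := by
        rw [Submodule.mem_annihilator_span_singleton]; exact hb'
      rcases hp.mem_or_mem this with h | h
      · rwa [Submodule.mem_annihilator_span_singleton] at h
      · exfalso; apply ha0
        rw [Submodule.mem_annihilator_span_singleton] at h
        exact h
  · push_neg at hc
    right
    rw [AssociatedPrimes.mem_iff, isAssociatedPrime_iff]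
    refine ⟨hp, Submodule.Quotient.mk x, ?_⟩
    rw [Submodule.bot_colon']
    ext b
    rw [Submodule.mem_annihilator_span_singleton, Submodule.mem_annihilator_span_singleton]
    rw [← Submodule.Quotient.mk_smul, Submodule.Quotient.mk_eq_zero]
    constructor
    · intro hb; rw [hb]; exact N.zero_mem
    · intro hb; exact hc b hb

lemma ass_quot_prime {p : Ideal R} (hp : p.IsPrime) :
    associatedPrimes R (R ⧸ p) ⊆ {p} := by
  rintro q ⟨hq, x, rfl⟩
  obtain ⟨x, rfl⟩ := Submodule.Quotient.mk_surjective p x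
  have hxp : x ∉ p := by
    intro hx
    apply hq.ne_top
    rw [Submodule.bot_colon', Ideal.radical_eq_top, Ideal.eq_top_iff_one, Submodule.mem_annihilator_span_singleton,
      ← Submodule.Quotient.mk_smul, Submodule.Quotient.mk_eq_zero]
    simpa using hx
  have : (Submodule.span R {Submodule.Quotient.mk (p := p) x}).annihilator = p := by
    ext b
    rw [Submodule.mem_annihilator_span_singleton, ← Submodule.Quotient.mk_smul,
      Submodule.Quotient.mk_eq_zero]
    constructor
    · intro hb
      rcases hp.mem_or_mem (show b * x ∈ p by simpa using hb) with h | h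
      · exact h
      · exact absurd h hxp
    · intro hb; simpa using p.mul_mem_right x hb
  rw [Submodule.bot_colon', this, hp.radical]; rfl

lemma assFin [IsNoetherianRing R] [Module.Finite R M] :
    (associatedPrimes R M).Finite := by
  have hN : IsNoetherian R M := inferInstance
  obtain ⟨N, hNmem, hNmax⟩ := (set_has_maximal_iff_noetherian.mpr hN)
    {N : Submodule R M | (associatedPrimes R N).Finite}
    ⟨⊥, by
      have : Subsingleton (⊥ : Submodule R M) := inferInstance
      simp only [Set.mem_setOf_eq, associatedPrimes.eq_empty_of_subsingleton]
      exact Set.finite_empty⟩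
  by_cases hNtop : N = ⊤
  · subst hNtop
    have := LinearEquiv.AssociatedPrimes.eq (Submodule.topEquiv (R := R) (M := M))
    rwa [← this]
  · exfalso
    have : Nontrivial (M ⧸ N) := Submodule.Quotient.nontrivial_iff.mpr hNtop
    obtain ⟨p, hpass⟩ := associatedPrimes.nonempty R (M ⧸ N)
    obtain ⟨hp, xb, hxb⟩ := isAssociatedPrime_iff.mp hpass
    rw [Submodule.bot_colon'] at hxb
    obtain ⟨x, rfl⟩ := Submodule.Quotient.mk_surjective N xb
    have hxN : x ∉ N := by
      intro hx
      apply hp.ne_top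
      rw [hxb, Ideal.eq_top_iff_one, Submodule.mem_annihilator_span_singleton,
        ← Submodule.Quotient.mk_smul, Submodule.Quotient.mk_eq_zero]
      simpa using hx
    set N' := N ⊔ Submodule.span R {x} with hN'
    have hle : N ≤ N' := le_sup_left
    have hlt : N < N' := by
      rw [lt_iff_le_and_ne]
      refine ⟨hle, fun h => hxN ?_⟩
      rw [h, hN']
      exact Submodule.mem_sup_right (Submodule.mem_span_singleton_self x)
    apply hNmax N' _ hlt
    -- show N' has finitely many associated primes
    show (associatedPrimes R N').Finite
    have hsub := ass_subset_union (R := R) (M := N') (Submodule.comap N'.subtype N)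
    have h1 : (associatedPrimes R (Submodule.comap N'.subtype N)).Finite := by
      rw [LinearEquiv.AssociatedPrimes.eq (Submodule.comapSubtypeEquivOfLe hle)]
      exact hNmem
    have h2 : (associatedPrimes R (N' ⧸ Submodule.comap N'.subtype N)).Finite := by
      -- build surjection R → N'/N with kernel p
      set ρ : R →ₗ[R] (N' ⧸ Submodule.comap N'.subtype N) :=
        (Submodule.mkQ _).comp
          ((LinearMap.toSpanSingleton R M x).codRestrict N'
            (fun r => Submodule.mem_sup_right (Submodule.smul_mem _ r (Submodule.mem_span_singleton_self x)))) with hρ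
      have hρsurj : Function.Surjective ρ := by
        rintro z
        obtain ⟨⟨v, hv⟩, rfl⟩ := Submodule.Quotient.mk_surjective _ z
        rw [hN'] at hv
        obtain ⟨n, hn, w, hw, rfl⟩ := Submodule.mem_sup.mp hv
        obtain ⟨r, rfl⟩ := Submodule.mem_span_singleton.mp hw
        refine ⟨r, ?_⟩
        rw [hρ]
        simp only [LinearMap.coe_comp, Function.comp_apply, Submodule.mkQ_apply]
        rw [Submodule.Quotient.eq]
        refine Submodule.mem_comap.mpr ?_
        show (LinearMap.toSpanSingleton R M x r : M) - (n + r • x) ∈ N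
        rw [LinearMap.toSpanSingleton_apply]
        simpa using N.neg_mem hn
      have hker : LinearMap.ker ρ = p := by
        ext r
        rw [LinearMap.mem_ker, hρ]
        simp only [LinearMap.coe_comp, Function.comp_apply, Submodule.mkQ_apply,
          Submodule.Quotient.mk_eq_zero]
        rw [hxb, Submodule.mem_annihilator_span_singleton, ← Submodule.Quotient.mk_smul,
          Submodule.Quotient.mk_eq_zero]
        refine ⟨fun h => ?_, fun h => ?_⟩
        · simpa using Submodule.mem_comap.mp h
        · refine Submodule.mem_comap.mpr ?_
          show (LinearMap.toSpanSingleton R M x r : M) ∈ N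
          simpa [LinearMap.toSpanSingleton_apply] using h
      have e2 : (R ⧸ p) ≃ₗ[R] (N' ⧸ Submodule.comap N'.subtype N) := by
        rw [← hker]
        exact ρ.quotKerEquivOfSurjective hρsurj
      rw [← LinearEquiv.AssociatedPrimes.eq e2]
      exact Set.Finite.subset (Set.finite_singleton p) (ass_quot_prime hp)
    exact Set.Finite.subset (Set.Finite.union h1 h2) hsub

end AssFin

section Reg

variable {R : Type u} [CommRing R] [IsNoetherianRing R] [IsLocalRing R]

open IsLocalRing

lemma exists_regular (hsoc : ∀ c : R, (∀ a ∈ maximalIdeal R, a * c = 0) → c = 0) :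
    ∃ t ∈ maximalIdeal R, ∀ c : R, t * c = 0 → c = 0 := by
  by_contra hcon
  push_neg at hcon
  have hZD : (maximalIdeal R : Set R) ⊆ ⋃ p ∈ associatedPrimes R R, (p : Set R) := by
    intro t ht
    rw [biUnion_associatedPrimes_eq_zero_divisors]
    obtain ⟨c, hc1, hc2⟩ := hcon t ht
    exact ⟨c, hc2, by simpa [smul_eq_mul] using hc1⟩
  have hfin : (associatedPrimes R R).Finite := assFin
  -- prime avoidance
  set s : Finset (Ideal R) := hfin.toFinset with hs
  have hZD' : (maximalIdeal R : Set R) ⊆ ⋃ p ∈ (s : Set (Ideal R)), (p : Set R) := by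
    intro y hy
    obtain ⟨T, ⟨q, rfl⟩, hT⟩ := hZD hy
    simp only [Set.mem_iUnion] at hT ⊢
    obtain ⟨hq, hyq⟩ := hT
    exact ⟨q, by simpa [hs] using hq, hyq⟩
  have := (Ideal.subset_union_prime (R := R) (s := s) (f := id) ⊥ ⊥
    (fun i hi _ _ => by
      have : i ∈ associatedPrimes R R := by simpa [hs] using hi
      exact this.isPrime)).mp hZD'
  obtain ⟨p, hps, hmp⟩ := this
  have hp : p ∈ associatedPrimes R R := by simpa [hs] using hps
  obtain ⟨hpprime, x, hx⟩ := isAssociatedPrime_iff.mp hp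
  rw [Submodule.bot_colon'] at hx
  have hx0 : x = 0 := by
    apply hsoc
    intro a ha
    have : a ∈ p := hmp ha
    rw [hx, Submodule.mem_annihilator_span_singleton] at this
    simpa using this
  apply hpprime.ne_top
  rw [hx, hx0]
  rw [Submodule.span_zero_singleton, Submodule.annihilator_bot]

end Reg


section ExtCore

variable {R : Type u} [CommRing R] {P2 P1 P0 : Type*}
  [AddCommGroup P2] [AddCommGroup P1] [AddCommGroup P0]
  [Module R P2] [Module R P1] [Module R P0]

lemma ext_core (S : Set R) (f : P2 →ₗ[R] P1) (g : P1 →ₗ[R] P0) {t : R} (htS : t ∈ S)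
    (htreg : ∀ c, t * c = 0 → c = 0)
    (hsoc : ∀ c : R, (∀ a ∈ S, ∃ b, a * c = t * b) → ∃ b, c = t * b)
    (hexact : ∀ y, g y = 0 → ∃ z, f z = y)
    (hmul : ∀ a ∈ S, ∀ x : P0, ∃ v, g v = a • x)
    (φ : P1 →ₗ[R] R) (hφ : ∀ z, φ (f z) = 0) :
    ∃ ψ : P0 →ₗ[R] R, ∀ y, ψ (g y) = φ y := by
  have φcongr : ∀ v w, g v = g w → φ v = φ w := by
    intro v w hvw
    have : g (v - w) = 0 := by rw [map_sub, hvw, sub_self]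
    obtain ⟨z, hz⟩ := hexact _ this
    have := hφ z
    rw [hz, map_sub] at this
    exact sub_eq_zero.mp this
  choose uu huu using fun x : P0 => hmul t htS x
  have hdiv : ∀ x : P0, ∃ b, t * b = φ (uu x) := by
    intro x
    obtain ⟨b, hb⟩ := hsoc (φ (uu x)) (by
      intro a ha
      obtain ⟨w, hw⟩ := hmul a ha x
      refine ⟨φ w, ?_⟩
      have h1 : g (a • uu x) = g (t • w) := by
        rw [map_smul, map_smul, huu, hw, smul_comm]
      have := φcongr _ _ h1
      rw [map_smul, map_smul] at this
      simpa [smul_eq_mul] using this)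
    exact ⟨b, hb.symm⟩
  set H : P0 → R := fun x => tdiv t (φ (uu x)) with hH
  have hHspec : ∀ x, t * H x = φ (uu x) := fun x => tdiv_spec (hdiv x)
  have hgH : ∀ x y : P0, g (uu x) = g (uu y) → H x = H y := by
    intro x y h
    rw [hH]; exact tdiv_unique htreg (by rw [hHspec y]; exact (φcongr _ _ h).symm)
  refine ⟨⟨⟨H, ?_⟩, ?_⟩, ?_⟩
  · intro x y
    apply tdiv_unique htreg
    have h1 : g (uu (x + y)) = g (uu x + uu y) := by
      rw [map_add, huu, huu, huu, smul_add]
    rw [mul_add, hHspec x, hHspec y, ← map_add]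
    exact (φcongr _ _ h1).symm
  · intro r x
    apply tdiv_unique htreg
    have h1 : g (uu (r • x)) = g (r • uu x) := by
      rw [map_smul, huu, huu, smul_comm]
    have h2 : φ (uu (r • x)) = r • φ (uu x) := by rw [φcongr _ _ h1, map_smul]
    simp only [RingHom.id_apply, smul_eq_mul] at h2 ⊢
    rw [h2, ← mul_assoc, mul_comm t r, mul_assoc, hHspec x]
  · intro y
    have h1 : g (uu (g y)) = g (t • y) := by rw [map_smul, huu]
    have h2 : t * H (g y) = t * φ y := by
      rw [hHspec, φcongr _ _ h1, map_smul, smul_eq_mul]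
    have := htreg _ (by rw [mul_sub, h2, sub_self] : t * (H (g y) - φ y) = 0)
    have := sub_eq_zero.mp this
    exact this

end ExtCore


section ExtOne
open Limits IsLocalRing
variable {R : Type u} [CommRing R] [IsLocalRing R]

lemma residue_smul_zero {a : R} (ha : a ∈ maximalIdeal R) (v : ResidueField R) :
    a • v = 0 := by
  obtain ⟨w, rfl⟩ := residue_surjective (R := R) v
  rw [Algebra.smul_def, IsLocalRing.ResidueField.algebraMap_eq, ← map_mul,
    IsLocalRing.residue_eq_zero_iff]
  exact Ideal.mul_mem_right w _ ha

lemma ext_one_subsingleton (t : R) (ht : t ∈ maximalIdeal R)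
    (htreg : ∀ c : R, t * c = 0 → c = 0)
    (hsoc : ∀ c : R, (∀ a ∈ maximalIdeal R, ∃ b, a * c = t * b) → ∃ b, c = t * b) :
    Subsingleton (((Ext R (ModuleCat.{u} R) 1).obj
      (Opposite.op (ModuleCat.of R (ResidueField R)))).obj (ModuleCat.of R R)) := by
  set kk : ModuleCat.{u} R := ModuleCat.of R (ResidueField R) with hkk
  set RR : ModuleCat.{u} R := ModuleCat.of R R with hRR
  have hPR : HasProjectiveResolution kk := inferInstance
  set P : ProjectiveResolution kk := hPR.out.some with hP
  have e := P.isoExt (R := R) 1 RR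
  suffices hz : IsZero ((P.complex.linearYonedaObj R RR).homology 1) by
    have hz2 : IsZero (((Ext R (ModuleCat.{u} R) 1).obj (Opposite.op kk)).obj RR) :=
      hz.of_iso e
    set X := ((Ext R (ModuleCat.{u} R) 1).obj (Opposite.op kk)).obj RR with hX
    have hid : (𝟙 X) = (0 : X ⟶ X) := hz2.eq_of_src _ _
    constructor
    intro a b
    have h1 : (𝟙 X) a = (0 : X ⟶ X) a := by rw [hid]
    have h2 : (𝟙 X) b = (0 : X ⟶ X) b := by rw [hid]
    rw [ModuleCat.id_apply] at h1 h2
    change a = (0 : X →ₗ[R] X) a at h1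
    change b = (0 : X →ₗ[R] X) b at h2
    rw [LinearMap.zero_apply] at h1 h2
    rw [h1, h2]
  rw [← HomologicalComplex.exactAt_iff_isZero_homology]
  rw [HomologicalComplex.exactAt_iff' _ 0 1 2 (by simp) (by simp)]
  rw [ShortComplex.moduleCat_exact_iff]
  intro φ hφ
  change (P.complex.X 1 ⟶ RR) at φ
  change (P.complex.linearYonedaObj R RR).d 1 2 φ = 0 at hφ
  have hexact := (ShortComplex.moduleCat_exact_iff _).mp (P.exact_succ 0)
  have hmul : ∀ a ∈ maximalIdeal R, ∀ x : P.complex.X 0,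
      ∃ v : P.complex.X 1, (P.complex.d 1 0) v = a • x := by
    intro a ha x
    set N : Submodule R (P.complex.X 0) :=
      LinearMap.range (P.complex.d 1 0).hom with hN
    set q : P.complex.X 0 ⟶ ModuleCat.of R ((P.complex.X 0) ⧸ N) := ModuleCat.ofHom N.mkQ with hq
    have hdq : P.complex.d 1 0 ≫ q = 0 := by
      apply ModuleCat.hom_ext; apply LinearMap.ext; intro v
      show N.mkQ ((P.complex.d 1 0) v) = 0
      rw [Submodule.mkQ_apply, Submodule.Quotient.mk_eq_zero]
      exact ⟨v, rfl⟩
    set uDesc := Cofork.IsColimit.desc P.isColimitCokernelCofork q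
      (by rw [hdq, zero_comp]) with hu
    have hfac : P.π.f 0 ≫ uDesc = q := by
      have := Cofork.IsColimit.π_desc' P.isColimitCokernelCofork q (by rw [hdq, zero_comp])
      exact this
    have hπ0 : (P.π.f 0) (a • x) = 0 := by
      rw [map_smul]
      exact residue_smul_zero ha _
    have hqx : q (a • x) = 0 := by
      rw [← hfac]
      show uDesc ((P.π.f 0) (a • x)) = 0
      rw [hπ0]; exact map_zero _
    have hmem : a • x ∈ N := by
      have h2 : N.mkQ (a • x) = 0 := hqx
      rwa [Submodule.mkQ_apply, Submodule.Quotient.mk_eq_zero] at h2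
    obtain ⟨v, hv⟩ := hmem
    exact ⟨v, hv⟩
  have hφ' : ∀ z : P.complex.X 2, φ ((P.complex.d 2 1) z) = 0 := by
    intro z
    have h1 : P.complex.d 2 1 ≫ φ = 0 := hφ
    have h2 := congrFun (congrArg DFunLike.coe (congrArg ModuleCat.Hom.hom h1)) z
    simpa using h2
  obtain ⟨ψ, hψ⟩ := ext_core (S := (maximalIdeal R : Set R))
    (P.complex.d 2 1).hom
    (P.complex.d 1 0).hom
    ht htreg hsoc hexact hmul φ.hom hφ'
  refine ⟨ModuleCat.ofHom ψ, ?_⟩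
  show P.complex.d 1 0 ≫ (ModuleCat.ofHom ψ : P.complex.X 0 ⟶ RR) = φ
  apply ModuleCat.hom_ext; apply LinearMap.ext; intro y
  exact hψ y

end ExtOne

/-- Let `(R,m,k)` be a commutative Noetherian local ring of depth at most 1 and `M` a finitely
generated reflexive `R`-module.  Then `M` is balanced if and only if `M` has a nonzero free
direct summand. -/
theorem balanced_iff_free_summand (R : Type u) (M : Type v) [CommRing R]
    [IsNoetherianRing R] [IsLocalRing R] (hdepth : DepthLEOne R)
    [AddCommGroup M] [Module R M] [Module.Finite R M] [Module.IsReflexive R M] :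
    IsBalanced R M ↔
      ∃ (N : Type v) (_ : AddCommGroup N) (_ : Module R N), Nonempty (M ≃ₗ[R] N × R) := by
  constructor
  · intro hbal
    by_cases hsurj : ∃ f : M →ₗ[R] R, Function.Surjective f
    · obtain ⟨f, hf⟩ := hsurj
      exact ⟨LinearMap.ker f, inferInstance, inferInstance, ⟨splitEquiv f hf⟩⟩
    · exfalso
      push_neg at hsurj
      have hmem : ∀ (f : M →ₗ[R] R) (x : M), f x ∈ IsLocalRing.maximalIdeal R := by
        intro f x
        have hne : LinearMap.range f ≠ ⊤ := by
          intro h; exact hsurj f (LinearMap.range_eq_top.mp h)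
        exact (IsLocalRing.le_maximalIdeal hne) (LinearMap.mem_range_self f x)
      have hfaith : ∀ c : R, (∀ x : M, c • x = 0) → c = 0 := by
        intro c hc
        have h0 : (fun r : R =>
            (⟨algebraMap R (Module.End R M) r, Subalgebra.algebraMap_mem _ r⟩ :
              Subalgebra.center R (Module.End R M))) c =
            (fun r : R =>
            (⟨algebraMap R (Module.End R M) r, Subalgebra.algebraMap_mem _ r⟩ :
              Subalgebra.center R (Module.End R M))) 0 := by
          apply Subtype.ext
          apply LinearMap.ext; intro x
          rw [Module.algebraMap_end_apply, Module.algebraMap_end_apply, hc x, zero_smul]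
        exact hbal.1 h0
      have hkill : ∀ c : R, (∀ (f : Module.Dual R M) (x : M), c * f x = 0) → c = 0 :=
        fun c h => hfaith c (kill_of_reflexive h)
      by_cases hs : ∃ s : R, s ≠ 0 ∧ ∀ a ∈ IsLocalRing.maximalIdeal R, a * s = 0
      · obtain ⟨s, hs0, hsm⟩ := hs
        apply hs0
        apply hkill
        intro f x
        rw [mul_comm]
        exact hsm _ (hmem f x)
      · push_neg at hs
        have hsoc0 : ∀ c : R, (∀ a ∈ IsLocalRing.maximalIdeal R, a * c = 0) → c = 0 := by
          intro c hc
          by_contra h0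
          obtain ⟨a, ha, hane⟩ := hs c h0
          exact hane (hc a ha)
        rcases hdepth with hH | hE
        · obtain ⟨φ₁, φ₂, hne⟩ := hH
          apply hne
          apply LinearMap.ext; intro v
          have hv : ∀ a ∈ IsLocalRing.maximalIdeal R, a * ((φ₁ - φ₂) v) = 0 := by
            intro a ha
            have h1 : a • ((φ₁ - φ₂) v) = (φ₁ - φ₂) (a • v) := (map_smul _ a v).symm
            rw [residue_smul_zero ha v, map_zero] at h1
            simpa [smul_eq_mul] using h1
          have h2 := hsoc0 _ hv
          have h3 : φ₁ v - φ₂ v = 0 := by simpa using h2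
          exact sub_eq_zero.mp h3
        · obtain ⟨t, ht, htreg⟩ := exists_regular hsoc0
          by_cases h2 : ∃ s : R, (¬∃ b, s = t * b) ∧
              ∀ a ∈ IsLocalRing.maximalIdeal R, ∃ b, a * s = t * b
          · obtain ⟨s, hs1, hs2⟩ := h2
            have hex : ∀ (f : Module.Dual R M) (x : M), ∃ b, t * b = s * f x := by
              intro f x
              obtain ⟨b, hb⟩ := hs2 (f x) (hmem f x)
              exact ⟨b, by rw [← hb]; ring⟩
            set α : Module.Dual R M →ₗ[R] Module.Dual R M :=
              { toFun := fun f =>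
                  { toFun := fun x => tdiv t (s * f x)
                    map_add' := by
                      intro x y
                      apply tdiv_unique htreg
                      rw [mul_add, tdiv_spec (hex f x), tdiv_spec (hex f y), ← mul_add, ← map_add]
                    map_smul' := by
                      intro r x
                      simp only [RingHom.id_apply, smul_eq_mul]
                      apply tdiv_unique htreg
                      rw [map_smul, smul_eq_mul]
                      linear_combination r * tdiv_spec (hex f x) }
                map_add' := by
                  intro f g
                  apply LinearMap.ext; intro x
                  show tdiv t (s * (f + g) x) = tdiv t (s * f x) + tdiv t (s * g x)
                  apply tdiv_unique htreg
                  rw [mul_add, tdiv_spec (hex f x), tdiv_spec (hex g x), ← mul_add,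
                    ← LinearMap.add_apply]
                map_smul' := by
                  intro r f
                  apply LinearMap.ext; intro x
                  show tdiv t (s * (r • f) x) = r * tdiv t (s * f x)
                  apply tdiv_unique htreg
                  rw [LinearMap.smul_apply, smul_eq_mul]
                  linear_combination r * tdiv_spec (hex f x) } with hα
            set Φ : Module.End R M :=
              ((Module.evalEquiv R M).symm.toLinearMap.comp α.dualMap).comp
                (Module.evalEquiv R M).toLinearMap with hΦdef
            have hΦval : ∀ (z : M) (f : Module.Dual R M), f (Φ z) = tdiv t (s * f z) := by
              intro z f
              have h1 : (Module.evalEquiv R M) (Φ z) =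
                  α.dualMap ((Module.evalEquiv R M) z) := by
                rw [hΦdef]
                simp only [LinearMap.coe_comp, Function.comp_apply, LinearEquiv.coe_coe]
                rw [LinearEquiv.apply_symm_apply]
              have h2 := congrFun (congrArg DFunLike.coe h1) f
              simpa [Module.evalEquiv_apply, Module.Dual.eval_apply,
                LinearMap.dualMap_apply, hα] using h2
            have hinj : ∀ x₁ x₂ : M, (∀ f : Module.Dual R M, f x₁ = f x₂) → x₁ = x₂ := by
              intro x₁ x₂ h
              apply (Module.evalEquiv R M).injective
              apply LinearMap.ext; intro f
              simpa [Module.evalEquiv_apply, Module.Dual.eval_apply] using h f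
            have hcent : Φ ∈ Subalgebra.center R (Module.End R M) := by
              rw [Subalgebra.mem_center_iff]
              intro ψ
              apply LinearMap.ext; intro x
              rw [Module.End.mul_apply, Module.End.mul_apply]
              apply hinj; intro f
              have hA := hΦval x (f.comp ψ)
              simp only [LinearMap.comp_apply] at hA
              rw [hΦval (ψ x) f]
              exact hA
            obtain ⟨r, hr⟩ := hbal.2 ⟨Φ, hcent⟩
            have hr' : algebraMap R (Module.End R M) r = Φ := congrArg Subtype.val hr
            have hkey : ∀ (f : Module.Dual R M) (x : M), (s - t * r) * f x = 0 := by
              intro f x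
              have h1 : f (Φ x) = tdiv t (s * f x) := hΦval x f
              have h2 : Φ x = r • x := by
                rw [← hr', Module.algebraMap_end_apply]
              rw [h2, map_smul, smul_eq_mul] at h1
              have h3 : t * (r * f x) = s * f x := by
                rw [h1, tdiv_spec (hex f x)]
              ring_nf
              ring_nf at h3
              linear_combination -h3
            apply hs1
            refine ⟨r, ?_⟩
            have h4 := hkill _ hkey
            have h5 : s - t * r = 0 := h4
            linear_combination h5
          · push_neg at h2
            have hsoc : ∀ c : R, (∀ a ∈ IsLocalRing.maximalIdeal R, ∃ b, a * c = t * b) →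
                ∃ b, c = t * b := by
              intro c hc
              by_contra hno
              rw [not_exists] at hno
              obtain ⟨a, ha, hab⟩ := h2 c hno
              obtain ⟨b, hb⟩ := hc a ha
              exact hab b hb
            have hss := ext_one_subsingleton t ht htreg hsoc
            obtain ⟨a, b, hab⟩ := hE
            exact hab (hss.allEq a b)
  · rintro ⟨N, _, _, ⟨e⟩⟩
    exact balanced_of_equiv e
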